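/- Let X be a finite-dimensional real vector space and let ρ be a left-continuous convex modular on X. Then ρ satisfies the Δ₂-property: for every sequence (x_j) ⊆ X with ρ(x_j) → 0 one has ρ(2x_j) → 0. -/

import Mathlib

open Filter Topology ENNReal

/-- A convex modular on a real vector space `X`. -/
structure IsConvexModular {X : Type*} [AddCommGroup X] [Module ℝ X] (ρ : X → ℝ≥0∞) : Prop where
  zero_iff : ∀ u : X, ρ u = 0 ↔ u = 0
  neg_eq : ∀ u : X, ρ (-u) = ρ u
  convex : ∀ α : ℝ, 0 ≤ α → α ≤ 1 → ∀ u v : X,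
    ρ (α • u + (1 - α) • v) ≤ ENNReal.ofReal α * ρ u + ENNReal.ofReal (1 - α) * ρ v

/-- `X_ρ`, the modular vector space associated to `ρ`. -/
def modularSet {X : Type*} [AddCommGroup X] [Module ℝ X] (ρ : X → ℝ≥0∞) : Set X :=
  {v : X | ∃ l : ℝ, 0 < l ∧ ρ (l • v) < ⊤}

/-- `ρ` is left-continuous. -/
def IsLeftContinuousModular {X : Type*} [AddCommGroup X] [Module ℝ X] (ρ : X → ℝ≥0∞) : Prop :=
  ∀ (u : X) (l₀ : ℝ), 0 < l₀ →
    Tendsto (fun l : ℝ => ρ (l • u)) (nhdsWithin l₀ (Set.Iio l₀)) (nhds (ρ (l₀ • u)))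

open Metric Set in
/-- Core lemma: on a finite-dimensional normed space, if the finiteness domain of a convex
modular spans the whole space, then the `Δ₂` property holds. -/
lemma core_delta2 {E : Type*} [NormedAddCommGroup E] [NormedSpace ℝ E] [FiniteDimensional ℝ E]
    (ρ : E → ℝ≥0∞) (hρ : IsConvexModular ρ)
    (hspan : Submodule.span ℝ {x : E | ρ x ≠ ⊤} = ⊤) :
    ∀ x : ℕ → E, Tendsto (fun j => ρ (x j)) atTop (nhds 0) →
      Tendsto (fun j => ρ ((2 : ℝ) • x j)) atTop (nhds 0) := by
  intro x hx
  rcases subsingleton_or_nontrivial E with hE | hE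
  · have h0 : ∀ j, ρ ((2:ℝ) • x j) = 0 := fun j => (hρ.zero_iff _).2 (Subsingleton.elim _ _)
    simpa [h0] using (tendsto_const_nhds : Tendsto (fun _ : ℕ => (0:ℝ≥0∞)) atTop (nhds 0))
  set D : Set E := {u : E | ρ u ≠ ⊤} with hD_def
  have hρ0 : ρ 0 = 0 := (hρ.zero_iff 0).2 rfl
  have h0D : (0 : E) ∈ D := by simp [hD_def, hρ0]
  have hDconv : Convex ℝ D := by
    intro u hu v hv a b ha hb hab
    have hb' : b = 1 - a := by linarith
    subst hb'
    have key := hρ.convex a ha (by linarith) u v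
    exact ne_top_of_le_ne_top
      (ENNReal.add_ne_top.2 ⟨ENNReal.mul_ne_top ENNReal.ofReal_ne_top hu,
        ENNReal.mul_ne_top ENNReal.ofReal_ne_top hv⟩) key
  have haff : affineSpan ℝ D = ⊤ := by
    rw [eq_top_iff]
    intro p _
    have hp : p ∈ (Submodule.span ℝ D : Set E) := by rw [hspan]; trivial
    rw [← affineSpan_insert_zero, Set.insert_eq_self.2 h0D] at hp
    exact hp
  obtain ⟨z, hz⟩ := (hDconv.interior_nonempty_iff_affineSpan_eq_top).2 haff
  have hDneg : -D = D := by
    ext w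
    simp only [Set.mem_neg, hD_def, Set.mem_setOf_eq]
    rw [show ρ (-w) = ρ w from hρ.neg_eq w]
  have hzD : -z ∈ D := by rw [← hDneg]; exact Set.neg_mem_neg.2 (interior_subset hz)
  have h0int : (0 : E) ∈ interior D := by
    have h := hDconv.combo_interior_closure_mem_interior hz (subset_closure hzD)
      (by norm_num : (0:ℝ) < 1/2) (by norm_num : (0:ℝ) ≤ 1/2) (by norm_num)
    simpa [smul_neg] using h
  set f : E → ℝ := fun y => (ρ y).toReal with hf_def
  have hρeq : ∀ y ∈ D, ρ y = ENNReal.ofReal (f y) := fun y hy => (ENNReal.ofReal_toReal hy).symm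
  have hfconv : ConvexOn ℝ (interior D) f := by
    refine ⟨hDconv.interior, ?_⟩
    intro u hu v hv a b ha hb hab
    have hb' : b = 1 - a := by linarith
    subst hb'
    have key := hρ.convex a ha (by linarith) u v
    have hu' : ρ u ≠ ⊤ := interior_subset hu
    have hv' : ρ v ≠ ⊤ := interior_subset hv
    have h1 : ENNReal.ofReal a * ρ u ≠ ⊤ := ENNReal.mul_ne_top ENNReal.ofReal_ne_top hu'
    have h2 : ENNReal.ofReal (1-a) * ρ v ≠ ⊤ := ENNReal.mul_ne_top ENNReal.ofReal_ne_top hv'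
    have h3 := ENNReal.toReal_mono (ENNReal.add_ne_top.2 ⟨h1, h2⟩) key
    rwa [ENNReal.toReal_add h1 h2, ENNReal.toReal_mul, ENNReal.toReal_mul,
      ENNReal.toReal_ofReal ha, ENNReal.toReal_ofReal (by linarith)] at h3
  have hfcont : ContinuousOn f (interior D) := hfconv.continuousOn isOpen_interior
  obtain ⟨r, hr0, hrball⟩ := Metric.isOpen_iff.1 isOpen_interior 0 h0int
  have hmono : ∀ (y : E) (t : ℝ), 0 ≤ t → t ≤ 1 → ρ (t • y) ≤ ρ y := by
    intro y t ht ht1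
    have h1 : ρ (t • y) ≤ ENNReal.ofReal t * ρ y := by
      have h := hρ.convex t ht ht1 y 0
      simpa [hρ0] using h
    calc ρ (t • y) ≤ ENNReal.ofReal t * ρ y := h1
      _ ≤ 1 * ρ y := by gcongr; exact ENNReal.ofReal_le_one.2 ht1
      _ = ρ y := one_mul _
  have hlow : ∀ δ : ℝ, 0 < δ → δ < r → ∃ m : ℝ≥0∞, 0 < m ∧ ∀ y : E, ρ y < m → ‖y‖ < δ := by
    intro δ hδ0 hδr
    have hsph : Metric.sphere (0:E) δ ⊆ interior D := by
      intro y hy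
      apply hrball
      rw [mem_ball_zero_iff]
      rw [mem_sphere_zero_iff_norm] at hy
      rw [hy]; exact hδr
    have hcpt : IsCompact (Metric.sphere (0:E) δ) := isCompact_sphere 0 δ
    have hne : (Metric.sphere (0:E) δ).Nonempty := NormedSpace.sphere_nonempty.2 hδ0.le
    obtain ⟨z₀, hz₀mem, hz₀min⟩ := hcpt.exists_isMinOn hne (hfcont.mono hsph)
    have hz₀ne : z₀ ≠ 0 := by
      intro h
      rw [h, mem_sphere_zero_iff_norm] at hz₀mem
      simp at hz₀mem
      exact hδ0.ne hz₀mem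
    have hρz₀top : ρ z₀ ≠ ⊤ := interior_subset (hsph hz₀mem)
    have hfz₀pos : 0 < f z₀ :=
      ENNReal.toReal_pos (fun h => hz₀ne ((hρ.zero_iff z₀).1 h)) hρz₀top
    refine ⟨ENNReal.ofReal (f z₀), ENNReal.ofReal_pos.2 hfz₀pos, ?_⟩
    intro y hy
    by_contra hnorm
    push_neg at hnorm
    have hny : 0 < ‖y‖ := lt_of_lt_of_le hδ0 hnorm
    set t : ℝ := δ / ‖y‖ with ht_def
    have ht0 : 0 < t := div_pos hδ0 hny
    have ht1 : t ≤ 1 := (div_le_one hny).2 hnorm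
    have hty : t • y ∈ Metric.sphere (0:E) δ := by
      rw [mem_sphere_zero_iff_norm, norm_smul, Real.norm_eq_abs, abs_of_pos ht0, ht_def,
        div_mul_cancel₀ _ hny.ne']
    have h1 : ENNReal.ofReal (f z₀) ≤ ρ (t • y) := by
      rw [hρeq _ (interior_subset (hsph hty))]
      exact ENNReal.ofReal_le_ofReal (hz₀min hty)
    exact absurd ((h1.trans (hmono y t ht0.le ht1)).trans_lt hy) (lt_irrefl _)
  have hx0 : Tendsto x atTop (nhds 0) := by
    rw [NormedAddCommGroup.tendsto_nhds_zero]
    intro ε hε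
    obtain ⟨m, hm0, hm⟩ := hlow (min (ε/2) (r/2)) (by positivity)
      (by rw [min_lt_iff]; right; linarith)
    filter_upwards [hx.eventually (gt_mem_nhds hm0)] with j hj
    exact lt_of_lt_of_le (hm _ hj) (le_trans (min_le_left _ _) (by linarith))
  have h2x : Tendsto (fun j => (2:ℝ) • x j) atTop (nhds (0:E)) := by
    have h := hx0.const_smul (2:ℝ)
    simpa using h
  have hmem : ∀ᶠ j in atTop, (2:ℝ) • x j ∈ Metric.ball (0:E) r :=
    h2x.eventually_mem (Metric.ball_mem_nhds _ hr0)
  have hfc : Tendsto (fun j => f ((2:ℝ) • x j)) atTop (nhds (f 0)) :=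
    (hfcont.continuousAt (isOpen_interior.mem_nhds h0int)).tendsto.comp h2x
  have hf0 : f 0 = 0 := by simp [hf_def, hρ0]
  have htρ : Tendsto (fun j => ENNReal.ofReal (f ((2:ℝ) • x j))) atTop (nhds 0) := by
    have h := ENNReal.tendsto_ofReal (hf0 ▸ hfc)
    simpa using h
  refine Tendsto.congr' ?_ htρ
  filter_upwards [hmem] with j hj
  exact (hρeq _ (interior_subset (hrball hj))).symm

/-- Every left-continuous convex modular on a finite-dimensional real vector space
satisfies the `Δ₂`-property. -/
theorem delta2_of_finiteDimensional {X : Type*} [AddCommGroup X] [Module ℝ X]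
    [FiniteDimensional ℝ X]
    (ρ : X → ℝ≥0∞) (hρ : IsConvexModular ρ) (hlc : IsLeftContinuousModular ρ) :
    ∀ x : ℕ → X, Tendsto (fun j => ρ (x j)) atTop (nhds 0) →
      Tendsto (fun j => ρ ((2 : ℝ) • x j)) atTop (nhds 0) := by
  intro x hx
  classical
  set D : Set X := {u : X | ρ u ≠ ⊤} with hD_def
  set Y : Submodule ℝ X := Submodule.span ℝ D with hY_def
  set ρY : Y → ℝ≥0∞ := fun y => ρ (y : X) with hρY_def
  have hρYconv : IsConvexModular ρY := by
    constructor
    · intro u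
      rw [hρY_def]
      simp only
      rw [hρ.zero_iff]
      exact ⟨fun h => Subtype.ext h, fun h => by rw [h]; rfl⟩
    · intro u
      show ρ ((-u : Y) : X) = ρ (u : X)
      rw [Submodule.coe_neg, hρ.neg_eq]
    · intro a ha ha1 u v
      show ρ (((a • u + (1-a) • v : Y) : X)) ≤ _
      rw [Submodule.coe_add, Submodule.coe_smul, Submodule.coe_smul]
      exact hρ.convex a ha ha1 u v
  have hspanY : Submodule.span ℝ {y : Y | ρY y ≠ ⊤} = ⊤ := by
    have h := Submodule.span_setOf_mem_eq_top (R := ℝ) (s := D)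
    exact h
  -- transfer to a normed model
  set n : ℕ := Module.finrank ℝ Y with hn_def
  set e : Y ≃ₗ[ℝ] (Fin n → ℝ) := (Module.finBasis ℝ Y).equivFun with he_def
  set σ : (Fin n → ℝ) → ℝ≥0∞ := fun v => ρY (e.symm v) with hσ_def
  have hσconv : IsConvexModular σ := by
    constructor
    · intro v
      rw [hσ_def]
      simp only
      rw [hρYconv.zero_iff]
      constructor
      · intro h
        have := congrArg e h
        simpa using this
      · intro h; rw [h]; simp
    · intro v
      show ρY (e.symm (-v)) = ρY (e.symm v)
      rw [map_neg, hρYconv.neg_eq]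
    · intro a ha ha1 u v
      show ρY (e.symm (a • u + (1-a) • v)) ≤ _
      rw [map_add, map_smul, map_smul]
      exact hρYconv.convex a ha ha1 _ _
  have hσspan : Submodule.span ℝ {v : Fin n → ℝ | σ v ≠ ⊤} = ⊤ := by
    have hset : {v : Fin n → ℝ | σ v ≠ ⊤} = ⇑e '' {y : Y | ρY y ≠ ⊤} := by
      ext v
      constructor
      · intro hv
        exact ⟨e.symm v, hv, e.apply_symm_apply v⟩
      · rintro ⟨y, hy, rfl⟩
        simpa [hσ_def, e.symm_apply_apply] using hy
    rw [hset, ← LinearEquiv.coe_coe, Submodule.span_image, hspanY, Submodule.map_top]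
    exact LinearMap.range_eq_top.2 e.surjective
  have hevmem : ∀ᶠ j in atTop, x j ∈ Y := by
    have h1 : ∀ᶠ j in atTop, ρ (x j) < 1 := hx.eventually (gt_mem_nhds (by norm_num))
    filter_upwards [h1] with j hj
    exact Submodule.subset_span (show ρ (x j) ≠ ⊤ from hj.ne_top)
  set y : ℕ → (Fin n → ℝ) := fun j => if h : x j ∈ Y then e ⟨x j, h⟩ else 0 with hy_def
  have hσy : ∀ᶠ j in atTop, σ (y j) = ρ (x j) := by
    filter_upwards [hevmem] with j hj
    simp only [hy_def, dif_pos hj, hσ_def, e.symm_apply_apply]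
    rfl
  have hσy' : (fun j => σ (y j)) =ᶠ[atTop] (fun j => ρ (x j)) := hσy
  have htend : Tendsto (fun j => σ (y j)) atTop (nhds 0) := Tendsto.congr' hσy'.symm hx
  have hcore := core_delta2 σ hσconv hσspan y htend
  refine Tendsto.congr' ?_ hcore
  filter_upwards [hevmem] with j hj
  show σ ((2:ℝ) • y j) = ρ ((2:ℝ) • x j)
  simp only [hy_def, dif_pos hj, hσ_def]
  rw [map_smul, e.symm_apply_apply]
  rfl
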